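/- There exist an injective sequence (x_n)_{n<ω} in ℤ and a point-separating subgroup H of Hom(ℤ,𝕋) with |H| = 𝔠 such that h(x_n) → 0 in 𝕋 for every h ∈ H; that is, x_n → 0 in the totally bounded group topology 𝒯_H induced on ℤ by H. -/

import Mathlib

open Filter Topology

local notation "𝕋" => AddCircle (1 : ℝ)

/-- The weak (initial) topology on `G` induced by a subgroup `H` of `Hom(G, 𝕋)`. -/
noncomputable def weakTopOf {G : Type*} [AddCommGroup G] (H : AddSubgroup (G →+ 𝕋)) :
    TopologicalSpace G :=
  ⨅ h : H, TopologicalSpace.induced (⇑(h : G →+ 𝕋)) inferInstance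

open Nat

lemma st17_fact_bound (b j : ℕ) (hb : 1 ≤ b) : ((b + j)! : ℝ)⁻¹ ≤ (b ! : ℝ)⁻¹ * (1/2) ^ j := by
  have h1 : (b ! : ℕ) * 2 ^ j ≤ (b + j)! := by
    calc b ! * 2 ^ j ≤ b ! * (b+1) ^ j := by gcongr; omega
      _ ≤ (b + j)! := Nat.factorial_mul_pow_le_factorial
  have h2 : (0:ℝ) < (b ! : ℝ) * 2 ^ j := by positivity
  have h1' : ((b ! : ℝ) * 2 ^ j) ≤ ((b+j)! : ℝ) := by exact_mod_cast h1
  calc ((b+j)! : ℝ)⁻¹ ≤ ((b ! : ℝ) * 2 ^ j)⁻¹ := by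
        apply inv_anti₀ h2 h1'
    _ = (b ! : ℝ)⁻¹ * (1/2) ^ j := by rw [mul_inv, one_div, inv_pow]

lemma st17_summable_tail (b : ℕ) (hb : 1 ≤ b) : Summable (fun j => ((b + j)! : ℝ)⁻¹) := by
  apply Summable.of_nonneg_of_le (fun j => by positivity) (fun j => st17_fact_bound b j hb)
  exact (summable_geometric_of_lt_one (by norm_num) (by norm_num)).mul_left _

lemma st17_tail_le (b : ℕ) (hb : 1 ≤ b) : ∑' j, ((b + j)! : ℝ)⁻¹ ≤ 2 * (b ! : ℝ)⁻¹ := by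
  calc ∑' j, ((b + j)! : ℝ)⁻¹ ≤ ∑' j : ℕ, (b ! : ℝ)⁻¹ * (1/2) ^ j := by
        apply Summable.tsum_le_tsum (fun j => st17_fact_bound b j hb) (st17_summable_tail b hb)
        exact (summable_geometric_of_lt_one (by norm_num) (by norm_num)).mul_left _
    _ = 2 * (b ! : ℝ)⁻¹ := by rw [tsum_mul_left, tsum_geometric_two]; ring

noncomputable def st17_cf (k : ℕ) : ℝ := ((3 + k)! : ℝ)⁻¹

lemma st17_cf_nonneg (k : ℕ) : 0 ≤ st17_cf k := by unfold st17_cf; positivity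

lemma st17_summable_cf : Summable st17_cf := st17_summable_tail 3 (by norm_num)

noncomputable def st17_tm (f : ℕ → Bool) (k : ℕ) : ℝ := if f k then st17_cf k else 0

lemma st17_tm_nonneg (f : ℕ → Bool) (k : ℕ) : 0 ≤ st17_tm f k := by
  unfold st17_tm; split
  · exact st17_cf_nonneg k
  · exact le_refl _

lemma st17_tm_le (f : ℕ → Bool) (k : ℕ) : st17_tm f k ≤ st17_cf k := by
  unfold st17_tm; split
  · exact le_refl _
  · exact st17_cf_nonneg k

lemma st17_summable_tm (f : ℕ → Bool) : Summable (st17_tm f) :=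
  Summable.of_nonneg_of_le (st17_tm_nonneg f) (st17_tm_le f) st17_summable_cf

noncomputable def st17_tv (f : ℕ → Bool) : ℝ := ∑' k, st17_tm f k

lemma st17_tv_nonneg (f : ℕ → Bool) : 0 ≤ st17_tv f :=
  tsum_nonneg (st17_tm_nonneg f)

lemma st17_tv_le (f : ℕ → Bool) : st17_tv f ≤ 1/3 := by
  have h1 : st17_tv f ≤ ∑' k, st17_cf k :=
    Summable.tsum_le_tsum (st17_tm_le f) (st17_summable_tm f) st17_summable_cf
  have h2 := st17_tail_le 3 (by norm_num)
  unfold st17_cf at h1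
  calc st17_tv f ≤ ∑' k, ((3 + k)! : ℝ)⁻¹ := h1
    _ ≤ 2 * ((3:ℕ)! : ℝ)⁻¹ := h2
    _ = 1/3 := by norm_num [Nat.factorial]

lemma st17_key (m : ℕ) : 2 * (((m+4))! : ℝ)⁻¹ < ((3+m)! : ℝ)⁻¹ := by
  have e : (((m+4))! : ℝ) = ((m:ℝ)+4) * ((3+m)! : ℝ) := by
    rw [show m+4 = (3+m)+1 by omega, Nat.factorial_succ]; push_cast; ring
  have hc : (0:ℝ) < ((3+m)! : ℝ)⁻¹ := by positivity
  rw [e, mul_inv]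
  calc 2 * (((m:ℝ)+4)⁻¹ * ((3+m)! : ℝ)⁻¹) = (2/((m:ℝ)+4)) * ((3+m)! : ℝ)⁻¹ := by ring
    _ < 1 * ((3+m)! : ℝ)⁻¹ := by
        apply mul_lt_mul_of_pos_right _ hc
        rw [div_lt_one (by positivity)]; linarith
    _ = ((3+m)! : ℝ)⁻¹ := one_mul _

lemma st17_tv_lt {f g : ℕ → Bool} (m : ℕ) (hf : f m = true) (hg : g m = false)
    (hlt : ∀ k < m, f k = g k) : st17_tv g < st17_tv f := by
  have hsf := st17_summable_tm f
  have hsg := st17_summable_tm g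
  set d : ℕ → ℝ := fun k => st17_tm f k - st17_tm g k with hd
  have hsd : Summable d := hsf.sub hsg
  have hsum : ∑' k, d k = st17_tv f - st17_tv g := Summable.tsum_sub hsf hsg
  have hsplit := Summable.sum_add_tsum_nat_add (f := d) (m+1) hsd
  have hhead : ∑ i ∈ Finset.range (m+1), d i = st17_cf m := by
    rw [Finset.sum_range_succ, Finset.sum_eq_zero, zero_add]
    · simp only [hd, st17_tm, hf, hg]; norm_num
    · intro i hi
      have := hlt i (Finset.mem_range.1 hi)
      simp only [hd, st17_tm, this, sub_self]
  -- tail bound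
  have hsds : Summable (fun i => d (i + (m+1))) := (summable_nat_add_iff (m+1)).2 hsd
  have hcfs : Summable (fun i => st17_cf (i + (m+1))) := (summable_nat_add_iff (m+1)).2 st17_summable_cf
  have htermabs : ∀ i, |d (i + (m+1))| ≤ st17_cf (i + (m+1)) := by
    intro i
    have h1 := st17_tm_nonneg f (i + (m+1))
    have h2 := st17_tm_nonneg g (i + (m+1))
    have h3 := st17_tm_le f (i + (m+1))
    have h4 := st17_tm_le g (i + (m+1))
    rw [abs_sub_le_iff]; constructor <;> linarith
  have htail : |∑' i, d (i + (m+1))| ≤ 2 * (((m+4))! : ℝ)⁻¹ := by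
    calc |∑' i, d (i + (m+1))| ≤ ∑' i, |d (i + (m+1))| := by
          simpa [Real.norm_eq_abs] using norm_tsum_le_tsum_norm (f := fun i => d (i + (m+1))) (by simpa [Real.norm_eq_abs] using hsds.abs)
      _ ≤ ∑' i, st17_cf (i + (m+1)) := Summable.tsum_le_tsum htermabs hsds.abs hcfs
      _ = ∑' i, (((m+4) + i)! : ℝ)⁻¹ := by
          apply tsum_congr; intro i; unfold st17_cf
          rw [show 3 + (i + (m+1)) = (m+4) + i by omega]
      _ ≤ 2 * (((m+4))! : ℝ)⁻¹ := st17_tail_le (m+4) (by omega)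
  have hcfm : st17_cf m = ((3+m)! : ℝ)⁻¹ := rfl
  have := st17_key m
  have habs := abs_le.1 htail
  have : 0 < st17_tv f - st17_tv g := by
    rw [← hsum, ← hsplit, hhead, hcfm]
    linarith [habs.1]
  linarith

lemma st17_tv_inj : Function.Injective st17_tv := by
  intro f g h
  by_contra hne
  have hex : ∃ k, f k ≠ g k := Function.ne_iff.1 hne
  classical
  have hm : f (Nat.find hex) ≠ g (Nat.find hex) := Nat.find_spec hex
  have hlt : ∀ k < Nat.find hex, f k = g k := fun k hk => not_not.1 (Nat.find_min hex hk)
  cases hfm : f (Nat.find hex) <;> cases hgm : g (Nat.find hex)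
  · rw [hfm, hgm] at hm; exact hm rfl
  · have := st17_tv_lt (Nat.find hex) hgm hfm (fun k hk => (hlt k hk).symm)
    rw [h] at this; exact lt_irrefl _ this
  · have := st17_tv_lt (Nat.find hex) hfm hgm hlt
    rw [h] at this; exact lt_irrefl _ this
  · rw [hfm, hgm] at hm; exact hm rfl

noncomputable def st17_chi (r : ℝ) : ℤ →+ 𝕋 := zmultiplesHom 𝕋 (r : 𝕋)

lemma st17_chi_apply (r : ℝ) (m : ℤ) : st17_chi r m = ((m * r : ℝ) : 𝕋) := by
  show m • ((r:ℝ) : 𝕋) = _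
  rw [← zsmul_eq_mul]
  exact (QuotientAddGroup.mk_zsmul _ r m).symm

lemma st17_int_coe_zero (z : ℤ) : (((z : ℝ)) : 𝕋) = 0 := by
  rw [AddCircle.coe_eq_zero_iff]; exact ⟨z, by simp⟩

lemma st17_coe_tendsto {R : ℕ → ℝ} (h : Tendsto R atTop (𝓝 0)) :
    Tendsto (fun n => ((R n : ℝ) : 𝕋)) atTop (𝓝 0) := by
  have hc := ((AddCircle.continuous_mk' (1:ℝ)).tendsto 0).comp h
  exact hc

lemma st17_mem (f : ℕ → Bool) :
    Tendsto (fun n : ℕ => st17_chi (st17_tv f) (((n+3)! : ℕ) : ℤ)) atTop (𝓝 0) := by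
  have hs := st17_summable_tm f
  set R : ℕ → ℝ := fun n => ((n+3)! : ℝ) * ∑' i, st17_tm f (i + (n+1)) with hR
  have heq : ∀ n, st17_chi (st17_tv f) (((n+3)! : ℕ) : ℤ) = ((R n : ℝ) : 𝕋) := by
    intro n
    rw [st17_chi_apply]
    have hsplit := Summable.sum_add_tsum_nat_add (f := st17_tm f) (n+1) hs
    have hdecomp : ((((n+3)! : ℕ) : ℤ) : ℝ) * st17_tv f
        = ((n+3)! : ℝ) * (∑ i ∈ Finset.range (n+1), st17_tm f i) + R n := by
      push_cast
      rw [st17_tv, ← hsplit]; ring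
    obtain ⟨z, hz⟩ : ∃ z : ℤ, ((n+3)! : ℝ) * (∑ i ∈ Finset.range (n+1), st17_tm f i)
        = (z : ℝ) := by
      refine ⟨∑ i ∈ Finset.range (n+1), (if f i then (((n+3)! / (3+i)! : ℕ) : ℤ) else 0), ?_⟩
      rw [Finset.mul_sum, Int.cast_sum]
      refine Finset.sum_congr rfl fun i hi => ?_
      have hin : i < n+1 := Finset.mem_range.1 hi
      have hdvd : (3+i)! ∣ (n+3)! := Nat.factorial_dvd_factorial (by omega)
      unfold st17_tm st17_cf
      rw [apply_ite (Int.cast : ℤ → ℝ)]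
      split
      · rw [Int.cast_natCast, Nat.cast_div hdvd (by positivity), div_eq_mul_inv]
      · simp
    rw [hdecomp, hz, QuotientAddGroup.mk_add, st17_int_coe_zero, zero_add]
  have h0R : ∀ n, 0 ≤ R n := fun n => by
    apply mul_nonneg (by positivity)
    exact tsum_nonneg (fun i => st17_tm_nonneg f _)
  have hub : ∀ n, R n ≤ 2 / ((n:ℝ)+4) := by
    intro n
    have htail : ∑' i, st17_tm f (i + (n+1)) ≤ 2 * (((n+4))! : ℝ)⁻¹ := by
      calc ∑' i, st17_tm f (i + (n+1)) ≤ ∑' i, st17_cf (i + (n+1)) :=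
            Summable.tsum_le_tsum (fun i => st17_tm_le f _) ((summable_nat_add_iff (n+1)).2 hs)
              ((summable_nat_add_iff (n+1)).2 st17_summable_cf)
        _ = ∑' i, (((n+4) + i)! : ℝ)⁻¹ := by
            apply tsum_congr; intro i; unfold st17_cf
            rw [show 3 + (i + (n+1)) = (n+4) + i by omega]
        _ ≤ 2 * (((n+4))! : ℝ)⁻¹ := st17_tail_le (n+4) (by omega)
    have e : (((n+4))! : ℝ) = ((n:ℝ)+4) * ((n+3)! : ℝ) := by
      rw [show n+4 = (n+3)+1 by omega, Nat.factorial_succ]; push_cast; ring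
    have hpos : (0:ℝ) < ((n+3)! : ℝ) := by positivity
    have hpos4 : (0:ℝ) < (n:ℝ)+4 := by positivity
    calc R n ≤ ((n+3)! : ℝ) * (2 * (((n+4))! : ℝ)⁻¹) := by
          apply mul_le_mul_of_nonneg_left htail (by positivity)
      _ = 2 / ((n:ℝ)+4) := by rw [e, mul_inv]; field_simp
  have hlim : Tendsto (fun n : ℕ => 2 / ((n:ℝ)+4)) atTop (𝓝 0) := by
    apply Tendsto.div_atTop tendsto_const_nhds
    exact tendsto_atTop_add_const_right atTop 4 tendsto_natCast_atTop_atTop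
  have hR0 : Tendsto R atTop (𝓝 0) :=
    tendsto_of_tendsto_of_tendsto_of_le_of_le tendsto_const_nhds hlim h0R hub
  exact (st17_coe_tendsto hR0).congr (fun n => (heq n).symm)

lemma st17_sep_mem (a : ℤ) (ha : a ≠ 0) :
    Tendsto (fun n : ℕ => st17_chi ((2 * a.natAbs : ℕ) : ℝ)⁻¹ (((n+3)! : ℕ) : ℤ))
      atTop (𝓝 0) := by
  apply Tendsto.congr' _ (tendsto_const_nhds (x := (0:𝕋)))
  filter_upwards [eventually_ge_atTop (2 * a.natAbs)] with n hn
  have hpos : 0 < 2 * a.natAbs := by omega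
  have hdvd : (2 * a.natAbs) ∣ (n+3)! := Nat.dvd_factorial hpos (by omega)
  rw [st17_chi_apply]
  have : ((((n+3)! : ℕ) : ℤ) : ℝ) * ((2 * a.natAbs : ℕ) : ℝ)⁻¹
      = (((((n+3)! / (2 * a.natAbs) : ℕ) : ℤ)) : ℝ) := by
    rw [Int.cast_natCast, Int.cast_natCast,
      Nat.cast_div hdvd (Nat.cast_ne_zero.2 (by omega)), div_eq_mul_inv]
  rw [this, st17_int_coe_zero]

lemma st17_sep_ne (a : ℤ) (ha : a ≠ 0) :
    st17_chi ((2 * a.natAbs : ℕ) : ℝ)⁻¹ a ≠ 0 := by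
  rw [st17_chi_apply]
  intro hz
  rw [AddCircle.coe_eq_zero_iff] at hz
  obtain ⟨z, hz⟩ := hz
  rw [zsmul_eq_mul, mul_one] at hz
  have hpos : (0:ℝ) < ((2 * a.natAbs : ℕ) : ℝ) := by
    have : 0 < 2 * a.natAbs := by omega
    exact_mod_cast this
  have h2 : (z : ℝ) * ((2 * a.natAbs : ℕ) : ℝ) = (a : ℝ) := by
    rw [hz]; field_simp
  have h3 : z * (2 * |a|) = a := by
    apply Int.cast_injective (α := ℝ)
    push_cast
    push_cast [Nat.cast_natAbs] at h2
    linear_combination h2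
  have hw : 0 < |a| := abs_pos.2 ha
  rcases abs_choice a with h | h
  · have h0 : (2*z - 1) * |a| = 0 := by linear_combination h3 - h
    rcases mul_eq_zero.1 h0 with h1 | h1 <;> omega
  · have h0 : (2*z + 1) * |a| = 0 := by linear_combination h3 + h
    rcases mul_eq_zero.1 h0 with h1 | h1 <;> omega

lemma st17_chi_tv_inj : Function.Injective (fun f => st17_chi (st17_tv f)) := by
  intro f g h
  have h1 : ((st17_tv f : ℝ) : 𝕋) = ((st17_tv g : ℝ) : 𝕋) := by
    have h' : st17_chi (st17_tv f) = st17_chi (st17_tv g) := h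
    have := DFunLike.congr_fun h' (1:ℤ)
    simpa [st17_chi_apply] using this
  have h2 : ((st17_tv f - st17_tv g : ℝ) : 𝕋) = 0 := by
    rw [sub_eq_add_neg, QuotientAddGroup.mk_add, QuotientAddGroup.mk_neg, h1]
    simp
  rw [AddCircle.coe_eq_zero_iff] at h2
  obtain ⟨z, hz⟩ := h2
  rw [zsmul_eq_mul, mul_one] at hz
  have hb1 := st17_tv_nonneg f
  have hb2 := st17_tv_nonneg g
  have hb3 := st17_tv_le f
  have hb4 := st17_tv_le g
  have habs : |(z : ℝ)| < 1 := by rw [hz, abs_lt]; constructor <;> linarith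
  have hz0 : z = 0 := by
    have habs2 : ((|z| : ℤ) : ℝ) < 1 := by rwa [← Int.cast_abs] at habs
    have habs3 : |z| < 1 := by exact_mod_cast habs2
    rw [abs_lt] at habs3
    omega
  rw [hz0] at hz
  have : st17_tv f = st17_tv g := by
    have := hz.symm
    push_cast at this
    linarith
  exact st17_tv_inj this


noncomputable def st17_H : AddSubgroup (ℤ →+ 𝕋) where
  carrier := {h : ℤ →+ 𝕋 | Tendsto (fun n : ℕ => h (((n+3)! : ℕ) : ℤ)) atTop (𝓝 0)}
  zero_mem' := by
    simpa using (tendsto_const_nhds : Tendsto (fun _ : ℕ => (0:𝕋)) atTop (𝓝 0))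
  add_mem' := by
    intro a b ha hb
    simpa using Filter.Tendsto.add ha hb
  neg_mem' := by
    intro a ha
    simpa using Filter.Tendsto.neg ha

lemma st17_mem_H_iff (h : ℤ →+ 𝕋) :
    h ∈ st17_H ↔ Tendsto (fun n : ℕ => h (((n+3)! : ℕ) : ℤ)) atTop (𝓝 0) := Iff.rfl

lemma st17_chi_mem_H (f : ℕ → Bool) : st17_chi (st17_tv f) ∈ st17_H := st17_mem f

theorem stmt17 :
    ∃ x : ℕ → ℤ, Function.Injective x ∧
    ∃ H : AddSubgroup (ℤ →+ 𝕋),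
      (∀ a : ℤ, a ≠ 0 → ∃ h ∈ H, h a ≠ 0) ∧
      Cardinal.mk H = Cardinal.continuum ∧
      (∀ h ∈ H, Tendsto (fun n => h (x n)) atTop (𝓝 (0 : 𝕋))) ∧
      Tendsto x atTop (@nhds ℤ (weakTopOf H) 0) := by
  classical
  refine ⟨fun n => (((n+3)! : ℕ) : ℤ), ?_, st17_H, ?_, ?_, ?_, ?_⟩
  · intro a b hab
    have hab' : (((a+3)! : ℕ) : ℤ) = (((b+3)! : ℕ) : ℤ) := hab
    have h1 : (a+3)! = (b+3)! := by exact_mod_cast hab'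
    rcases lt_trichotomy a b with h | h | h
    · have := (Nat.factorial_lt (show 0 < a+3 by omega)).2 (show a+3 < b+3 by omega)
      omega
    · exact h
    · have := (Nat.factorial_lt (show 0 < b+3 by omega)).2 (show b+3 < a+3 by omega)
      omega
  · -- separation
    intro a ha
    exact ⟨st17_chi ((2 * a.natAbs : ℕ) : ℝ)⁻¹, st17_sep_mem a ha, st17_sep_ne a ha⟩
  · -- cardinality
    apply le_antisymm
    · calc Cardinal.mk st17_H ≤ Cardinal.mk (ℤ →+ 𝕋) := Cardinal.mk_subtype_le _
        _ = Cardinal.mk 𝕋 := (Cardinal.mk_congr (zmultiplesHom 𝕋)).symm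
        _ ≤ Cardinal.mk ℝ := Cardinal.mk_le_of_surjective
              (f := (QuotientAddGroup.mk : ℝ → 𝕋)) QuotientAddGroup.mk_surjective
        _ = Cardinal.continuum := Cardinal.mk_real
    · have hinj : Function.Injective
          (fun f : ℕ → Bool => (⟨st17_chi (st17_tv f), st17_chi_mem_H f⟩ : st17_H)) := by
        intro f g hfg
        apply st17_chi_tv_inj
        exact congrArg Subtype.val hfg
      have hle := Cardinal.mk_le_of_injective hinj
      calc Cardinal.continuum = 2 ^ Cardinal.aleph0 := Cardinal.two_power_aleph0.symm
        _ = Cardinal.mk Bool ^ Cardinal.mk ℕ := by rw [Cardinal.mk_bool, Cardinal.mk_nat]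
        _ = Cardinal.mk (ℕ → Bool) := Cardinal.power_def Bool ℕ
        _ ≤ Cardinal.mk st17_H := hle
  · -- tendsto for members
    intro h hh
    exact hh
  · -- weak topology
    rw [weakTopOf, _root_.nhds_iInf]
    rw [tendsto_iInf]
    intro h
    rw [nhds_induced, tendsto_comap_iff]
    have hh : Tendsto (fun n : ℕ => (h : ℤ →+ 𝕋) (((n+3)! : ℕ) : ℤ)) atTop (𝓝 0) := h.2
    simpa [Function.comp_def, map_zero] using hh
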